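/- arXiv:1508.02163 — 4 statements merged into one kernel-verified Lean document; each statement's English description precedes it below -/
import Mathlib

section
/- Let Q be an n×n real symmetric matrix, R an m×m real symmetric matrix, and S an m×n real matrix. Then the block matrix [[Q, Sᵀ],[S, R]] is positive semidefinite if and only if R is positive semidefinite, Q − Sᵀ R⁺ S is positive semidefinite, and the range of S is contained in the range of R (where R⁺ denotes the Moore–Penrose pseudoinverse of R). -/
open Matrix

lemma eq_of_forall_mulVec_eq {a b : ℕ} (A B : Matrix (Fin a) (Fin b) ℝ)
    (h : ∀ v, A *ᵥ v = B *ᵥ v) : A = B := by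
  ext i j
  have := congrFun (h (Pi.single j 1)) i
  simpa using this

lemma posSemidef_fromBlocks_diag {a b : ℕ} {A : Matrix (Fin a) (Fin a) ℝ}
    {D : Matrix (Fin b) (Fin b) ℝ} (hA : A.PosSemidef) (hD : D.PosSemidef) :
    (fromBlocks A 0 0 D).PosSemidef := by
  refine PosSemidef.of_dotProduct_mulVec_nonneg ?_ ?_
  · unfold Matrix.IsHermitian
    rw [fromBlocks_conjTranspose, hA.1.eq, hD.1.eq, conjTranspose_zero]
    rw [show ((0 : Matrix (Fin a) (Fin b) ℝ))ᴴ = 0 from conjTranspose_zero]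
  · intro x
    rw [fromBlocks_mulVec]
    have hx : x = Sum.elim (x ∘ Sum.inl) (x ∘ Sum.inr) := (Sum.elim_comp_inl_inr x).symm
    nth_rewrite 1 [hx]
    simp only [star_trivial, zero_mulVec, add_zero, zero_add, sumElim_dotProduct_sumElim]
    have := hA.dotProduct_mulVec_nonneg (x ∘ Sum.inl)
    have := hD.dotProduct_mulVec_nonneg (x ∘ Sum.inr)
    simp only [star_trivial] at *
    positivity

/-- Extended Schur lemma: the block matrix [[Q, Sᵀ],[S, R]] is positive semidefinite
iff R ⪰ 0, Q − Sᵀ R⁺ S ⪰ 0 and range S ⊆ range R.  The Moore–Penrose pseudoinverse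
R⁺ is encoded by the four Penrose conditions (which determine it uniquely). -/
theorem stmt_0 {n m : ℕ} (Q : Matrix (Fin n) (Fin n) ℝ) (R : Matrix (Fin m) (Fin m) ℝ)
    (S : Matrix (Fin m) (Fin n) ℝ) (hQ : Q.IsSymm) (hR : R.IsSymm)
    (Rp : Matrix (Fin m) (Fin m) ℝ)
    (h1 : R * Rp * R = R) (h2 : Rp * R * Rp = Rp)
    (h3 : (R * Rp)ᵀ = R * Rp) (h4 : (Rp * R)ᵀ = Rp * R) :
    (Matrix.fromBlocks Q Sᵀ S R).PosSemidef ↔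
      R.PosSemidef ∧ (Q - Sᵀ * Rp * S).PosSemidef ∧
        LinearMap.range S.mulVecLin ≤ LinearMap.range R.mulVecLin := by
  have hA : Rpᵀ * R = R * Rp := by
    calc Rpᵀ * R = Rpᵀ * Rᵀ := by rw [hR]
    _ = (R * Rp)ᵀ := (transpose_mul _ _).symm
    _ = R * Rp := h3
  -- the key: R * Rp * S = S implies the congruence identities
  constructor
  · intro hM
    -- R is PSD
    have hRpsd : R.PosSemidef := by
      have := hM.submatrix Sum.inr
      have he : (fromBlocks Q Sᵀ S R).submatrix Sum.inr Sum.inr = R := by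
        ext i j; simp [fromBlocks]
      rwa [he] at this
    -- kernel of R is contained in kernel of Sᵀ
    have hker : ∀ y : Fin m → ℝ, R *ᵥ y = 0 → Sᵀ *ᵥ y = 0 := by
      intro y hy
      have hb : ∀ x : Fin n → ℝ, (Sᵀ *ᵥ y) ⬝ᵥ x = 0 := by
        intro x
        set a : ℝ := x ⬝ᵥ (Q *ᵥ x) with ha
        set b : ℝ := (Sᵀ *ᵥ y) ⬝ᵥ x with hbdef
        have hq : ∀ t : ℝ, 0 ≤ a * (t * t) + (2 * b) * t + 0 := by
          intro t
          have h0 := hM.dotProduct_mulVec_nonneg (Sum.elim (t • x) y)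
          rw [fromBlocks_mulVec] at h0
          simp only [star_trivial, Sum.elim_comp_inl, Sum.elim_comp_inr, hy, add_zero,
            sumElim_dotProduct_sumElim] at h0
          have hxb : x ⬝ᵥ (Sᵀ *ᵥ y) = b := dotProduct_comm _ _
          have hyb : y ⬝ᵥ (S *ᵥ x) = b := by
            rw [dotProduct_mulVec, hbdef, mulVec_transpose]
          have e1 : (t • x) ⬝ᵥ (Q *ᵥ (t • x) + Sᵀ *ᵥ y) = t * t * a + t * b := by
            simp only [dotProduct_add, mulVec_smul, dotProduct_smul, smul_dotProduct,
              smul_eq_mul, hxb, ← ha]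
            ring
          have e2 : y ⬝ᵥ (S *ᵥ (t • x)) = t * b := by
            simp only [mulVec_smul, dotProduct_smul, smul_eq_mul, hyb]
          rw [e1, e2] at h0
          nlinarith [h0]
        have hd := discrim_le_zero hq
        rw [discrim] at hd
        nlinarith [hd]
      have := hb (Sᵀ *ᵥ y)
      exact (dotProduct_self_eq_zero).mp this
    -- hence R * Rp * S = S
    have hRRpS : R * Rp * S = S := by
      have hRP : R * (1 - R * Rp) = 0 := by
        have hPR : (1 - R * Rp) * R = 0 := by
          rw [sub_mul, one_mul, Matrix.mul_assoc, ← Matrix.mul_assoc, h1, sub_self]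
        calc R * (1 - R * Rp) = ((1 - R * Rp)ᵀ * Rᵀ)ᵀ := by rw [← transpose_mul, transpose_transpose]
        _ = ((1 - R * Rp) * R)ᵀ := by rw [transpose_sub, transpose_one, h3, hR]
        _ = 0 := by rw [hPR, transpose_zero]
      have hSP : Sᵀ * (1 - R * Rp) = 0 := by
        apply eq_of_forall_mulVec_eq
        intro v
        rw [← mulVec_mulVec, zero_mulVec]
        apply hker
        rw [mulVec_mulVec, hRP, zero_mulVec]
      have : Sᵀ = Sᵀ * (R * Rp) := by
        rw [Matrix.mul_sub, Matrix.mul_one, sub_eq_zero] at hSP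
        exact hSP
      calc R * Rp * S = (Sᵀ * (R * Rp))ᵀ := by rw [transpose_mul, h3, transpose_transpose]
      _ = Sᵀᵀ := by rw [← this]
      _ = S := transpose_transpose S
    have hSRRp : Sᵀ * (R * Rp) = Sᵀ := by
      have := congrArg Matrix.transpose hRRpS
      rwa [transpose_mul, h3] at this
    -- range condition
    have hrange : LinearMap.range S.mulVecLin ≤ LinearMap.range R.mulVecLin := by
      rintro z ⟨v, rfl⟩
      refine ⟨Rp *ᵥ (S *ᵥ v), ?_⟩
      simp only [mulVecLin_apply, mulVec_mulVec]
      rw [← Matrix.mul_assoc, hRRpS]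
    -- Schur complement PSD via congruence with K = [[1,0],[-Rp*S,1]]
    have hQS : Sᵀ * Rpᵀ * S = Sᵀ * Rp * S := by
      calc Sᵀ * Rpᵀ * S = Sᵀ * Rpᵀ * (R * Rp * S) := by rw [hRRpS]
      _ = Sᵀ * (Rpᵀ * R) * (Rp * S) := by simp only [Matrix.mul_assoc]
      _ = Sᵀ * (R * Rp) * (Rp * S) := by rw [hA]
      _ = Sᵀ * (R * Rp) * Rp * S := by simp only [Matrix.mul_assoc]
      _ = Sᵀ * Rp * S := by rw [hSRRp]
    have he1 : (Rp * S)ᵀ * R = Sᵀ := by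
      calc (Rp * S)ᵀ * R = Sᵀ * (Rpᵀ * R) := by rw [transpose_mul, Matrix.mul_assoc]
      _ = Sᵀ * (R * Rp) := by rw [hA]
      _ = Sᵀ := hSRRp
    set K : Matrix (Fin n ⊕ Fin m) (Fin n ⊕ Fin m) ℝ :=
      fromBlocks 1 0 (-(Rp * S)) 1 with hK
    have hfact : Kᴴ * (fromBlocks Q Sᵀ S R) * K = fromBlocks (Q - Sᵀ * Rp * S) 0 0 R := by
      rw [hK, conjTranspose_eq_transpose_of_trivial, fromBlocks_transpose,
        fromBlocks_multiply, fromBlocks_multiply]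
      rw [fromBlocks_inj]
      have hx : Sᵀ * Rpᵀ * R = Sᵀ := by rw [← transpose_mul]; exact he1
      refine ⟨?_, ?_, ?_, ?_⟩
      · simp only [transpose_one, transpose_zero, transpose_neg, transpose_mul,
          Matrix.one_mul, Matrix.mul_one, Matrix.zero_mul, Matrix.mul_zero,
          Matrix.neg_mul, Matrix.mul_neg, add_zero, zero_add, neg_neg]
        rw [hx, hQS]
        simp [sub_eq_add_neg]
      · simp only [transpose_one, transpose_zero, transpose_neg, transpose_mul,
          Matrix.one_mul, Matrix.mul_one, Matrix.zero_mul, Matrix.mul_zero,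
          Matrix.neg_mul, Matrix.mul_neg, add_zero, zero_add, neg_neg]
        rw [hx]
        simp
      · simp only [transpose_one, transpose_zero, transpose_neg, transpose_mul,
          Matrix.one_mul, Matrix.mul_one, Matrix.zero_mul, Matrix.mul_zero,
          Matrix.neg_mul, Matrix.mul_neg, add_zero, zero_add, neg_neg]
        rw [← Matrix.mul_assoc, hRRpS]
        simp
      · simp
    have hD := hM.conjTranspose_mul_mul_same K
    rw [hfact] at hD
    have hSchur : (Q - Sᵀ * Rp * S).PosSemidef := by
      have := hD.submatrix Sum.inl
      have he : (fromBlocks (Q - Sᵀ * Rp * S) 0 0 R).submatrix Sum.inl Sum.inl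
          = Q - Sᵀ * Rp * S := by ext i j; simp [fromBlocks]
      rwa [he] at this
    exact ⟨hRpsd, hSchur, hrange⟩
  · rintro ⟨hRpsd, hSchur, hrange⟩
    have hRRpS : R * Rp * S = S := by
      apply eq_of_forall_mulVec_eq
      intro v
      obtain ⟨w, hw⟩ := hrange ⟨v, rfl⟩
      simp only [mulVecLin_apply] at hw
      rw [← mulVec_mulVec, ← hw, mulVec_mulVec, h1]
    have hSRRp : Sᵀ * (R * Rp) = Sᵀ := by
      have := congrArg Matrix.transpose hRRpS
      rwa [transpose_mul, h3] at this
    have he1 : (Rp * S)ᵀ * R = Sᵀ := by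
      calc (Rp * S)ᵀ * R = Sᵀ * (Rpᵀ * R) := by rw [transpose_mul, Matrix.mul_assoc]
      _ = Sᵀ * (R * Rp) := by rw [hA]
      _ = Sᵀ := hSRRp
    set L : Matrix (Fin n ⊕ Fin m) (Fin n ⊕ Fin m) ℝ :=
      fromBlocks 1 0 (Rp * S) 1 with hL
    have hfact : Lᴴ * (fromBlocks (Q - Sᵀ * Rp * S) 0 0 R) * L = fromBlocks Q Sᵀ S R := by
      rw [hL, conjTranspose_eq_transpose_of_trivial, fromBlocks_transpose,
        fromBlocks_multiply, fromBlocks_multiply]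
      rw [fromBlocks_inj]
      refine ⟨?_, ?_, ?_, ?_⟩
      · simp only [transpose_one, transpose_zero, Matrix.one_mul, Matrix.mul_one,
          Matrix.zero_mul, Matrix.mul_zero, add_zero, zero_add]
        rw [he1, ← Matrix.mul_assoc]
        simp
      · simp only [transpose_one, transpose_zero, Matrix.one_mul, Matrix.mul_one,
          Matrix.zero_mul, Matrix.mul_zero, add_zero, zero_add]
        exact he1
      · simp only [transpose_one, transpose_zero, Matrix.one_mul, Matrix.mul_one,
          Matrix.zero_mul, Matrix.mul_zero, add_zero, zero_add]
        rw [← Matrix.mul_assoc, hRRpS]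
      · simp
    have := (posSemidef_fromBlocks_diag hSchur hRpsd).conjTranspose_mul_mul_same L
    rwa [hfact] at this
end

section
/- Let U be a real Hilbert space, M₂ : U → U bounded self-adjoint positive semidefinite, M₁ : H → U bounded linear, x ∈ H, and for ε > 0 set f(ε) = ⟨(M₂ + εI)⁻¹M₁x, M₁x⟩. Then for each α ≥ 1, the limit of ε^α f(ε) as ε → 0⁺ exists (in ℝ). -/
/-- For α ≥ 1, ε^α ⟨(M₂+εI)⁻¹M₁x, M₁x⟩ converges as ε → 0⁺. -/
theorem stmt_9 {H U : Type*} [NormedAddCommGroup H] [InnerProductSpace ℝ H] [CompleteSpace H]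
    [NormedAddCommGroup U] [InnerProductSpace ℝ U] [CompleteSpace U]
    (M₂ : U →L[ℝ] U) (hM₂ : ∀ u v : U, (inner ℝ (M₂ u) v : ℝ) = (inner ℝ u (M₂ v) : ℝ))
    (hpos : ∀ u : U, 0 ≤ (inner ℝ (M₂ u) u : ℝ))
    (M₁ : H →L[ℝ] U) (x : H)
    (N : ℝ → (U →L[ℝ] U))
    (hN : ∀ ε : ℝ, 0 < ε →
      (∀ u : U, N ε (M₂ u + ε • u) = u) ∧ (∀ u : U, M₂ (N ε u) + ε • N ε u = u))
    (α : ℝ) (hα : 1 ≤ α) :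
    ∃ L : ℝ, Filter.Tendsto (fun ε : ℝ => ε ^ α * (inner ℝ (N ε (M₁ x)) (M₁ x) : ℝ))
      (nhdsWithin 0 (Set.Ioi 0)) (nhds L) := by
  set y := M₁ x with hy
  set g : ℝ → ℝ := fun ε => ε * (inner ℝ (N ε y) y : ℝ) with hg
  -- g is nonnegative
  have hg_nonneg : ∀ ε : ℝ, 0 < ε → 0 ≤ g ε := by
    intro ε hε
    obtain ⟨hl, hr⟩ := hN ε hε
    set z := N ε y with hz
    have h1 : M₂ z + ε • z = y := hr y
    have heq : (inner ℝ z y : ℝ) = inner ℝ z (M₂ z) + ε * inner ℝ z z := by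
      rw [← h1, inner_add_right, real_inner_smul_right]
    have h2 : (0:ℝ) ≤ inner ℝ z (M₂ z) := by
      rw [real_inner_comm]; exact hpos _
    have h3 : (0:ℝ) ≤ inner ℝ z z := real_inner_self_nonneg
    have : (0:ℝ) ≤ (inner ℝ z y : ℝ) := by
      rw [heq]; positivity
    exact mul_nonneg hε.le this
  -- g is monotone on (0, ∞)
  have hg_mono : ∀ δ ε : ℝ, 0 < δ → δ ≤ ε → g δ ≤ g ε := by
    intro δ ε hδ hδε
    have hε : 0 < ε := lt_of_lt_of_le hδ hδε
    obtain ⟨hlε, hrε⟩ := hN ε hε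
    obtain ⟨hlδ, hrδ⟩ := hN δ hδ
    set a := N ε (N δ y) with ha
    have h1 : M₂ a + ε • a = N δ y := hrε (N δ y)
    have h2 : M₂ (N δ y) + δ • N δ y = y := hrδ y
    have hyeq : y = M₂ (M₂ a) + (ε + δ) • M₂ a + (ε * δ) • a := by
      rw [← h2, ← h1]
      simp only [map_add, map_smul, add_smul, smul_add, smul_smul]
      module
    have hNεy : N ε y = M₂ a + δ • a := by
      have : M₂ (M₂ a + δ • a) + ε • (M₂ a + δ • a) = y := by
        rw [hyeq]
        simp only [map_add, map_smul, add_smul, smul_add, smul_smul]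
        module
      rw [← this, hlε]
    have hNδy : N δ y = M₂ a + ε • a := h1.symm
    -- difference formula
    have hdiff : g ε - g δ = (ε - δ) * (inner ℝ (M₂ a) y : ℝ) := by
      simp only [hg, hNεy, hNδy]
      simp only [inner_add_left, real_inner_smul_left]
      ring
    have hpos2 : (0:ℝ) ≤ inner ℝ (M₂ a) y := by
      have : (inner ℝ (M₂ a) y : ℝ) = inner ℝ (M₂ a) (M₂ (M₂ a)) + (ε + δ) * inner ℝ (M₂ a) (M₂ a)
          + (ε * δ) * inner ℝ (M₂ a) a := by
        rw [hyeq]; simp only [inner_add_right, real_inner_smul_right]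
      rw [this]
      have t1 : (0:ℝ) ≤ inner ℝ (M₂ a) (M₂ (M₂ a)) := by
        rw [real_inner_comm]; exact hpos _
      have t2 : (0:ℝ) ≤ inner ℝ (M₂ a) (M₂ a) := real_inner_self_nonneg
      have t3 : (0:ℝ) ≤ inner ℝ (M₂ a) a := by
        have := hpos a; rwa [real_inner_comm] at this ⊢
      have hεδ : (0:ℝ) ≤ ε + δ := by linarith
      have hεδ2 : (0:ℝ) ≤ ε * δ := mul_nonneg hε.le hδ.le
      positivity
    nlinarith [hdiff]
  -- g converges at 0⁺
  have hmonoOn : MonotoneOn g (Set.Ioo (0:ℝ) 1) := by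
    intro u hu v hv huv
    exact hg_mono u v hu.1 huv
  have hbdd : BddBelow (g '' Set.Ioo (0:ℝ) 1) := by
    refine ⟨0, ?_⟩
    rintro _ ⟨ε, hε, rfl⟩
    exact hg_nonneg ε hε.1
  have hne : (Set.Ioo (0:ℝ) 1).Nonempty := ⟨1/2, by norm_num⟩
  have hgL : Filter.Tendsto g (nhdsWithin 0 (Set.Ioi 0))
      (nhds (sInf (g '' Set.Ioo (0:ℝ) 1))) :=
    MonotoneOn.tendsto_nhdsWithin_Ioo_right hne hmonoOn hbdd
  -- ε^(α-1) converges to 0^(α-1)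
  have hpow : Filter.Tendsto (fun ε : ℝ => ε ^ (α - 1)) (nhdsWithin 0 (Set.Ioi 0))
      (nhds ((0:ℝ) ^ (α - 1))) := by
    have : ContinuousAt (fun ε : ℝ => ε ^ (α - 1)) 0 :=
      Real.continuousAt_rpow_const 0 (α - 1) (Or.inr (by linarith))
    exact this.tendsto.mono_left nhdsWithin_le_nhds
  refine ⟨(0:ℝ) ^ (α - 1) * sInf (g '' Set.Ioo (0:ℝ) 1), ?_⟩
  refine Filter.Tendsto.congr' ?_ (hpow.mul hgL)
  filter_upwards [self_mem_nhdsWithin] with ε (hε : ε ∈ Set.Ioi 0)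
  have hε' : (0:ℝ) < ε := hε
  have : ε ^ (α - 1) * ε = ε ^ α := by
    rw [← Real.rpow_add_one hε'.ne' (α - 1), sub_add_cancel]
  simp only [hg]
  rw [← this]
  ring
end

section
/- For the deterministic control system X'(s) = u(s) on [0,1] with X(0) = x and cost J(u) = X(1)² + ∫₀¹ s² u(s)² ds, the infimum of J over u ∈ L²(0,1;ℝ) equals 0 for every x ∈ ℝ. -/
open MeasureTheory

lemma key_small_cost (x ε : ℝ) (hε : 0 < ε) :
    ∃ u : ℝ → ℝ, MemLp u 2 (volume.restrict (Set.Ioc (0:ℝ) 1)) ∧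
      (x + ∫ r in Set.Ioc (0:ℝ) 1, u r) ^ 2
        + (∫ s in Set.Ioc (0:ℝ) 1, s ^ 2 * (u s) ^ 2) < ε := by
  set L : ℝ := Real.sqrt (x ^ 2 / ε) + 1 with hLdef
  have hsq : Real.sqrt (x ^ 2 / ε) ^ 2 = x ^ 2 / ε :=
    Real.sq_sqrt (div_nonneg (sq_nonneg x) hε.le)
  have hsnn : 0 ≤ Real.sqrt (x ^ 2 / ε) := Real.sqrt_nonneg _
  have hL1 : 1 ≤ L := by rw [hLdef]; linarith
  have hL0 : 0 < L := lt_of_lt_of_le one_pos hL1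
  have hεL : ε * Real.sqrt (x ^ 2 / ε) ^ 2 = x ^ 2 := by
    rw [hsq]; field_simp
  have hLε : x ^ 2 / L ^ 2 < ε := by
    rw [div_lt_iff₀ (by positivity), hLdef]
    nlinarith [mul_nonneg hε.le hsnn]
  set δ : ℝ := Real.exp (-L) with hδdef
  have hδ0 : 0 < δ := Real.exp_pos _
  have hδ1 : δ < 1 := by
    rw [hδdef, Real.exp_lt_one_iff]; linarith
  have hinv : δ⁻¹ = Real.exp L := by
    rw [hδdef, Real.exp_neg, inv_inv]
  set u : ℝ → ℝ := Set.indicator (Set.Ioc δ 1) (fun s => -x / L * s⁻¹) with hudef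
  haveI : IsFiniteMeasure (volume.restrict (Set.Ioc (0:ℝ) 1)) := by
    constructor
    rw [Measure.restrict_apply_univ]
    simp [Real.volume_Ioc]
  have humeas : Measurable u :=
    (measurable_const.mul measurable_inv).indicator measurableSet_Ioc
  have hmem : MemLp u 2 (volume.restrict (Set.Ioc (0:ℝ) 1)) := by
    apply MemLp.of_bound humeas.aestronglyMeasurable (|x| / L * δ⁻¹)
    filter_upwards with s
    by_cases hs : s ∈ Set.Ioc δ 1
    · rw [hudef, Set.indicator_of_mem hs]
      have hs0 : 0 < s := lt_of_lt_of_le hδ0 hs.1.le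
      have h1 : s⁻¹ ≤ δ⁻¹ := inv_anti₀ hδ0 hs.1.le
      rw [Real.norm_eq_abs, abs_mul, abs_div, abs_neg, abs_inv,
        abs_of_pos hs0, abs_of_pos hL0]
      exact mul_le_mul_of_nonneg_left h1 (by positivity)
    · rw [hudef, Set.indicator_of_notMem hs, norm_zero]
      positivity
  have hI1 : (∫ r in Set.Ioc (0:ℝ) 1, u r) = -x := by
    rw [hudef]
    rw [setIntegral_indicator measurableSet_Ioc]
    have hinter : Set.Ioc (0:ℝ) 1 ∩ Set.Ioc δ 1 = Set.Ioc δ 1 := by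
      rw [Set.Ioc_inter_Ioc]
      simp [max_eq_right hδ0.le]
    rw [hinter, ← intervalIntegral.integral_of_le hδ1.le,
      intervalIntegral.integral_const_mul, integral_inv (by
        intro h
        rw [Set.uIcc_of_le hδ1.le] at h
        exact absurd h.1 (not_le.mpr hδ0))]
    have hlog : Real.log (1 / δ) = L := by rw [one_div, hinv, Real.log_exp]
    rw [hlog]
    field_simp
  have hI2 : (∫ s in Set.Ioc (0:ℝ) 1, s ^ 2 * (u s) ^ 2)
      = (1 - δ) * (x ^ 2 / L ^ 2) := by
    have heq : (fun s : ℝ => s ^ 2 * (u s) ^ 2)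
        = Set.indicator (Set.Ioc δ 1) (fun _ => x ^ 2 / L ^ 2) := by
      funext s
      by_cases hs : s ∈ Set.Ioc δ 1
      · have hs0 : s ≠ 0 := (lt_of_lt_of_le hδ0 hs.1.le).ne'
        rw [hudef, Set.indicator_of_mem hs, Set.indicator_of_mem hs]
        field_simp
      · rw [hudef, Set.indicator_of_notMem hs, Set.indicator_of_notMem hs]
        ring
    rw [heq, setIntegral_indicator measurableSet_Ioc]
    have hinter : Set.Ioc (0:ℝ) 1 ∩ Set.Ioc δ 1 = Set.Ioc δ 1 := by
      rw [Set.Ioc_inter_Ioc]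
      simp [max_eq_right hδ0.le]
    rw [hinter, setIntegral_const, measureReal_def, Real.volume_Ioc, smul_eq_mul,
      ENNReal.toReal_ofReal (by linarith)]
  refine ⟨u, hmem, ?_⟩
  rw [hI1, hI2]
  have hx2 : 0 ≤ x ^ 2 / L ^ 2 := by positivity
  nlinarith

/-- The infimum of J(u) = (x + ∫₀¹ u)² + ∫₀¹ s²u(s)² ds over u ∈ L²(0,1) equals 0. -/
theorem stmt_14 (x : ℝ) :
    IsGLB {y : ℝ | ∃ u : ℝ → ℝ, MemLp u 2 (volume.restrict (Set.Ioc (0:ℝ) 1)) ∧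
        y = (x + ∫ r in Set.Ioc (0:ℝ) 1, u r) ^ 2
          + ∫ s in Set.Ioc (0:ℝ) 1, s ^ 2 * (u s) ^ 2} 0 := by
  constructor
  · rintro y ⟨u, hu, rfl⟩
    have h2 : 0 ≤ ∫ s in Set.Ioc (0:ℝ) 1, s ^ 2 * (u s) ^ 2 :=
      setIntegral_nonneg measurableSet_Ioc (fun s _ => by positivity)
    positivity
  · intro b hb
    by_contra hb0
    push_neg at hb0
    obtain ⟨u, hmem, hlt⟩ := key_small_cost x b hb0
    have hle := hb ⟨u, hmem, rfl⟩
    linarith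
end

section
/- Let U be a real Hilbert space and J : U → ℝ a convex, continuous function. Suppose (εₖ) is a sequence of positive reals converging to 0 and (uₖ) a sequence in U such that J(u) + εₖ‖u‖² ≥ J(uₖ) + εₖ‖uₖ‖² for all u ∈ U and all k (i.e., uₖ minimizes the Tikhonov-regularized functional). If uₖ converges weakly to u*, then u* is a global minimizer of J on U. -/
/-- Weak limits of minimizers of Tikhonov regularizations J + εₖ‖·‖² (εₖ → 0⁺) are
global minimizers of the convex continuous functional J. -/
theorem stmt_17 {U : Type*} [NormedAddCommGroup U] [InnerProductSpace ℝ U] [CompleteSpace U]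
    (J : U → ℝ) (hconv : ConvexOn ℝ Set.univ J) (hcont : Continuous J)
    (ε : ℕ → ℝ) (hεpos : ∀ k, 0 < ε k) (hε0 : Filter.Tendsto ε Filter.atTop (nhds 0))
    (u : ℕ → U)
    (hmin : ∀ k, ∀ v : U, J (u k) + ε k * ‖u k‖ ^ 2 ≤ J v + ε k * ‖v‖ ^ 2)
    (u₀ : U)
    (hw : ∀ h : U, Filter.Tendsto (fun k => (inner ℝ h (u k) : ℝ)) Filter.atTop
      (nhds (inner ℝ h u₀ : ℝ))) :
    ∀ v : U, J u₀ ≤ J v := by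
  intro v
  by_contra hlt
  push_neg at hlt
  -- epigraph of J
  set t : Set (U × ℝ) := { p : U × ℝ | p.1 ∈ Set.univ ∧ J p.1 ≤ p.2 } with ht
  have htconv : Convex ℝ t := hconv.convex_epigraph
  have htclosed : IsClosed t := by
    have : t = { p : U × ℝ | J p.1 ≤ p.2 } := by
      ext p; simp [ht]
    rw [this]
    exact isClosed_le (hcont.comp continuous_fst) continuous_snd
  have hxnot : (u₀, J v) ∉ t := by
    intro h
    exact absurd h.2 (not_le.2 hlt)
  obtain ⟨f, c, hfx, hft⟩ := geometric_hahn_banach_point_closed htconv htclosed hxnot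
  -- decompose f
  set g : U →L[ℝ] ℝ := f.comp (ContinuousLinearMap.inl ℝ U ℝ) with hg
  set a : ℝ := f (0, 1) with ha
  have hdecomp : ∀ x : U, ∀ s : ℝ, f (x, s) = g x + s * a := by
    intro x s
    have : (x, s) = (x, (0 : ℝ)) + s • ((0 : U), (1 : ℝ)) := by
      simp [Prod.ext_iff]
    rw [this, map_add, map_smul]
    simp [hg, ha, smul_eq_mul]
  have hepi : ∀ x : U, ∀ s : ℝ, J x ≤ s → c < g x + s * a := by
    intro x s hs
    have := hft (x, s) ⟨Set.mem_univ _, hs⟩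
    rwa [hdecomp] at this
  have hxval : g u₀ + J v * a < c := by
    have := hfx; rwa [hdecomp] at this
  -- a ≥ 0
  have hanonneg : 0 ≤ a := by
    by_contra hneg
    push_neg at hneg
    set s : ℝ := max (J u₀) ((c - g u₀) / a) with hs
    have h1 := hepi u₀ s (le_max_left _ _)
    have h2 : (c - g u₀) / a ≤ s := le_max_right _ _
    have h3 : s * a ≤ c - g u₀ := by
      have := mul_le_mul_of_nonpos_right h2 hneg.le
      rwa [div_mul_cancel₀ _ hneg.ne] at this
    linarith
  -- a ≠ 0
  have hapos : 0 < a := by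
    rcases hanonneg.lt_or_eq with h | h
    · exact h
    · exfalso
      have h1 := hepi u₀ (J u₀) le_rfl
      rw [← h] at h1 hxval
      linarith
  -- Riesz representation of g
  obtain ⟨w, hwrep⟩ : ∃ w : U, ∀ x : U, (inner ℝ w x : ℝ) = g x :=
    ⟨(InnerProductSpace.toDual ℝ U).symm g, fun x => InnerProductSpace.toDual_symm_apply⟩
  have hgconv : Filter.Tendsto (fun k => g (u k)) Filter.atTop (nhds (g u₀)) := by
    have := hw w
    simpa [hwrep] using this
  -- sequences
  have hA : Filter.Tendsto (fun k => (c - g (u k)) / a) Filter.atTop (nhds ((c - g u₀) / a)) :=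
    ((tendsto_const_nhds.sub hgconv).div_const a)
  have hB : Filter.Tendsto (fun k => J v + ε k * ‖v‖ ^ 2) Filter.atTop (nhds (J v)) := by
    have : Filter.Tendsto (fun k => ε k * ‖v‖ ^ 2) Filter.atTop (nhds (0 * ‖v‖ ^ 2)) :=
      hε0.mul_const _
    simpa using tendsto_const_nhds.add this
  have hle : ∀ k, (c - g (u k)) / a ≤ J v + ε k * ‖v‖ ^ 2 := by
    intro k
    have h1 : c < g (u k) + J (u k) * a := hepi (u k) (J (u k)) le_rfl
    have h2 : J (u k) ≤ J v + ε k * ‖v‖ ^ 2 := by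
      have := hmin k v
      nlinarith [sq_nonneg ‖u k‖, (hεpos k).le, mul_nonneg (hεpos k).le (sq_nonneg ‖u k‖)]
    have h3 : (c - g (u k)) / a ≤ J (u k) := by
      rw [div_le_iff₀ hapos]
      linarith
    linarith
  have hfinal : (c - g u₀) / a ≤ J v := le_of_tendsto_of_tendsto' hA hB hle
  have : J v < (c - g u₀) / a := by
    rw [lt_div_iff₀ hapos]
    linarith
  linarith
end
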